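/- For d ≥ 5 and λ = −1, the function f₂(r) = (1−r²)^{(5−d)/2}/(d−4+r²) solves the ODE (r²−1)f'' + ((2(λ+d−1)r² + 1−d)/r)·f' + ((λ+d−1)(λ+d−2) + V(r))·f = 0 on (0,1), where V(r) = −8(d−3)(d−4)/(d−4+r²)². -/

import Mathlib

open Real

/-- For `d ≥ 5` and `λ = −1`, the function `f₂(r) = (1−r²)^{(5−d)/2}/(d−4+r²)` solves
`(r²−1)f'' + ((2(λ+d−1)r² + 1−d)/r)f' + ((λ+d−1)(λ+d−2) + V(r))f = 0` on `(0,1)`,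
where `V(r) = −8(d−3)(d−4)/(d−4+r²)²`. -/
theorem f2_solves_ode (d : ℕ) (hd : 5 ≤ d)
    (f₂ : ℝ → ℝ)
    (hf₂ : ∀ r : ℝ, f₂ r =
      (1 - r ^ 2) ^ (((5 : ℝ) - d) / 2) / ((d : ℝ) - 4 + r ^ 2))
    (V : ℝ → ℝ)
    (hV : ∀ r : ℝ, V r = -8 * ((d : ℝ) - 3) * ((d : ℝ) - 4) / ((d : ℝ) - 4 + r ^ 2) ^ 2) :
    ∀ r ∈ Set.Ioo (0 : ℝ) 1,
      (r ^ 2 - 1) * deriv (deriv f₂) r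
        + ((2 * ((-1 : ℝ) + d - 1) * r ^ 2 + 1 - d) / r) * deriv f₂ r
        + (((-1 : ℝ) + d - 1) * ((-1 : ℝ) + d - 2) + V r) * f₂ r = 0 := by
  have hc5 : (5 : ℝ) ≤ (d : ℝ) := by exact_mod_cast hd
  set c : ℝ := (d : ℝ) with hcdef
  set p : ℝ := (5 - c) / 2 with hp
  set a : ℝ := -2 * p * (c - 4) - 2 with ha
  set b : ℝ := 2 - 2 * p with hb
  -- closed form for f₂
  have hfeq : f₂ = fun x : ℝ => (1 - x ^ 2) ^ p / (c - 4 + x ^ 2) := by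
    funext x; rw [hf₂]
  -- positivity facts on Ioo
  have ht : ∀ x ∈ Set.Ioo (0:ℝ) 1, 0 < 1 - x ^ 2 := by
    intro x hx
    nlinarith [hx.1, hx.2]
  have hH : ∀ x : ℝ, 0 < c - 4 + x ^ 2 := by
    intro x; nlinarith [sq_nonneg x]
  -- first derivative
  have hd1 : ∀ x ∈ Set.Ioo (0:ℝ) 1, HasDerivAt f₂
      ((1 - x ^ 2) ^ (p - 1) * (a * x + b * x ^ 3) / (c - 4 + x ^ 2) ^ 2) x := by
    intro x hx
    have htx := ht x hx
    have h1 : HasDerivAt (fun x : ℝ => 1 - x ^ 2) (-(2 * x)) x := by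
      simpa using ((hasDerivAt_pow 2 x).const_sub 1)
    have hg : HasDerivAt (fun x : ℝ => (1 - x ^ 2) ^ p)
        ((-(2 * x)) * p * (1 - x ^ 2) ^ (p - 1)) x :=
      h1.rpow_const (Or.inl (ne_of_gt htx))
    have hh : HasDerivAt (fun x : ℝ => c - 4 + x ^ 2) (2 * x) x := by
      simpa using ((hasDerivAt_pow 2 x).const_add (c - 4))
    have hdiv := hg.div hh (ne_of_gt (hH x))
    rw [hfeq]
    refine hdiv.congr_deriv ?_
    have hpow : (1 - x ^ 2) ^ p = (1 - x ^ 2) ^ (p - 1) * (1 - x ^ 2) := by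
      rw [show p = (p - 1) + 1 by ring, rpow_add_one (ne_of_gt htx)]; ring_nf
    rw [hpow, ha, hb]
    ring
  intro r hr
  have htr := ht r hr
  have hHr := hH r
  have hrne : r ≠ 0 := ne_of_gt hr.1
  -- derivative function G
  set G : ℝ → ℝ := fun x => (1 - x ^ 2) ^ (p - 1) * (a * x + b * x ^ 3) / (c - 4 + x ^ 2) ^ 2
    with hG
  have hev : deriv f₂ =ᶠ[nhds r] G :=
    Filter.eventuallyEq_of_mem (Ioo_mem_nhds hr.1 hr.2) (fun x hx => (hd1 x hx).deriv)
  -- second derivative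
  have h1 : HasDerivAt (fun x : ℝ => 1 - x ^ 2) (-(2 * r)) r := by
    simpa using ((hasDerivAt_pow 2 r).const_sub 1)
  have hg1 : HasDerivAt (fun x : ℝ => (1 - x ^ 2) ^ (p - 1))
      ((-(2 * r)) * (p - 1) * (1 - r ^ 2) ^ (p - 1 - 1)) r :=
    h1.rpow_const (Or.inl (ne_of_gt htr))
  have hQ : HasDerivAt (fun x : ℝ => a * x + b * x ^ 3) (a + b * (3 * r ^ 2)) r := by
    have := ((hasDerivAt_id r).const_mul a).add ((hasDerivAt_pow 3 r).const_mul b)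
    exact this.congr_deriv (by norm_num)
  have hh : HasDerivAt (fun x : ℝ => c - 4 + x ^ 2) (2 * r) r := by
    simpa using ((hasDerivAt_pow 2 r).const_add (c - 4))
  have hden : HasDerivAt (fun x : ℝ => (c - 4 + x ^ 2) ^ 2)
      ((2 : ℕ) * (c - 4 + r ^ 2) ^ 1 * (2 * r)) r := hh.pow 2
  have hG2 : HasDerivAt G
      (((((-(2 * r)) * (p - 1) * (1 - r ^ 2) ^ (p - 1 - 1)) * (a * r + b * r ^ 3)
          + (1 - r ^ 2) ^ (p - 1) * (a + b * (3 * r ^ 2))) * (c - 4 + r ^ 2) ^ 2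
          - (1 - r ^ 2) ^ (p - 1) * (a * r + b * r ^ 3)
            * ((2 : ℕ) * (c - 4 + r ^ 2) ^ 1 * (2 * r))) / ((c - 4 + r ^ 2) ^ 2) ^ 2) r :=
    (hg1.mul hQ).div hden (pow_ne_zero 2 (ne_of_gt hHr))
  have hderiv2 := hev.deriv_eq.trans hG2.deriv
  have hderiv1 : deriv f₂ r = G r := (hd1 r hr).deriv
  rw [hderiv2, hderiv1, hG, hf₂, hV]
  have htne : (1 : ℝ) - r ^ 2 ≠ 0 := ne_of_gt htr
  have e1 : (1 - r ^ 2) ^ (p - 1) = (1 - r ^ 2) ^ (p - 1 - 1) * (1 - r ^ 2) := by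
    have h := rpow_add_one htne (p - 1 - 1)
    rw [show p - 1 - 1 + 1 = p - 1 by ring] at h
    exact h
  have e2 : (1 - r ^ 2) ^ (((5 : ℝ) - c) / 2) = (1 - r ^ 2) ^ (p - 1 - 1) * (1 - r ^ 2) ^ 2 := by
    have h1 := rpow_add_one htne (p - 1 - 1)
    have h2 := rpow_add_one htne (p - 1 - 1 + 1)
    rw [show ((5 : ℝ) - c) / 2 = p - 1 - 1 + 1 + 1 by rw [hp]; ring, h2, h1]
    ring
  rw [← hp] at e2
  simp only [e1, e2]
  rw [ha, hb, hp]
  have hHne : c - 4 + r ^ 2 ≠ 0 := ne_of_gt hHr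
  field_simp
  ring
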